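/- Fix τ > 0. There is a constant K > 0 such that the following holds for all sufficiently large n. Set γ = γ(n,τ) and w = e^{γ}·log^{(3)}(n). Let S_1, …, S_{n'} be a circular sequence of independent identically distributed {0,1}-valued random variables with n' ≤ 4n/γ, whose common success probability p satisfies p ≤ exp(−e^{−γ}) and 1 − p ≤ e^{−γ/4}. Let W be the sum of the lengths of all success runs of length greater than w. Then E[W] ≤ K·τ^{3/4}·n/(γ·(log^{(2)}(n))^{1/4}·(log^{(3)}(n))^{1/2}). -/

import Mathlib

open MeasureTheory ProbabilityTheory Filter

/-- Twice iterated natural logarithm. -/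
noncomputable def loglog (n : ℕ) : ℝ := Real.log (Real.log n)

/-- Thrice iterated natural logarithm. -/
noncomputable def logloglog (n : ℕ) : ℝ := Real.log (Real.log (Real.log n))

/-- `γ(n, τ) = log(τ·log^{(2)}(n) / (2·(log^{(3)}(n))²))`. -/
noncomputable def gam (n : ℕ) (τ : ℝ) : ℝ :=
  Real.log (τ * loglog n / (2 * (logloglog n) ^ 2))

/-- The threshold `w = e^{γ(n,τ)}·log^{(3)}(n)` distinguishing narrow and wide runs. -/
noncomputable def wThr (n : ℕ) (τ : ℝ) : ℝ := Real.exp (gam n τ) * logloglog n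

/-- The length of the maximal circular run of `true`s of `s` containing the index `i`;
`0` if `s i = false`. -/
noncomputable def runLen {n' : ℕ} (s : ZMod n' → Bool) (i : ZMod n') : ℕ :=
  sSup {k : ℕ | k ≤ n' ∧ ∃ j : ZMod n',
    (∀ m : ℕ, m < k → s (j + (m : ZMod n')) = true) ∧
    ∃ t : ℕ, t < k ∧ i = j + (t : ZMod n')}

/-- The sum of the lengths of all success runs of length greater than `w` (the
number of indices lying in such a run). -/
noncomputable def runSumGT {n' : ℕ} (w : ℝ) (s : ZMod n' → Bool) : ℕ :=
  Nat.card {i : ZMod n' | w < (runLen s i : ℝ)}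

lemma run_decomp {n' : ℕ} (s : ZMod n' → Bool) (i : ZMod n') (L : ℕ) (hL : 1 ≤ L)
    (h : L ≤ runLen s i) :
    (∀ m : ℕ, m < L → s (i + (m : ZMod n')) = true) ∨
    ∃ b : ℕ, 1 ≤ b ∧ b < L ∧ s (i + (b : ZMod n')) = false ∧
      (∀ m : ℕ, m < L → s (i + (b : ZMod n') - (L : ZMod n') + (m : ZMod n')) = true) := by
  set R := {k : ℕ | k ≤ n' ∧ ∃ j : ZMod n',
    (∀ m : ℕ, m < k → s (j + (m : ZMod n')) = true) ∧
    ∃ t : ℕ, t < k ∧ i = j + (t : ZMod n')} with hR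
  have hbdd : BddAbove R := ⟨n', fun k hk => hk.1⟩
  have hne : R.Nonempty := by
    by_contra hc
    rw [Set.not_nonempty_iff_eq_empty] at hc
    have : runLen s i = 0 := by
      simp only [runLen, ← hR, hc, csSup_empty]
      rfl
    omega
  have hmem : runLen s i ∈ R := Nat.sSup_mem hne hbdd
  obtain ⟨hkn, j, hrun, t, ht, hij⟩ := hmem
  set k := runLen s i with hk
  by_cases hall : ∀ m : ℕ, m < L → s (i + (m : ZMod n')) = true
  · exact Or.inl hall
  · push_neg at hall
    have hex : ∃ b : ℕ, b < L ∧ s (i + (b : ZMod n')) = false := by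
      obtain ⟨m, hm, hsm⟩ := hall
      exact ⟨m, hm, by simpa using hsm⟩
    right
    set b := Nat.find hex with hbdef
    obtain ⟨hbL, hbF⟩ := Nat.find_spec hex
    have hmin : ∀ m : ℕ, m < b → s (i + (m : ZMod n')) = true := by
      intro m hm
      have hfm := Nat.find_min hex hm
      push_neg at hfm
      rcases Bool.eq_false_or_eq_true (s (i + (m : ZMod n'))) with h' | h'
      · exact h'
      · exact absurd h' (hfm (lt_trans hm hbL))
    have hsi : s i = true := by rw [hij]; exact hrun t ht
    have hb1 : 1 ≤ b := by
      rcases Nat.eq_zero_or_pos b with h0 | h0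
      · exfalso
        have hbF0 : s (i + ((0:ℕ) : ZMod n')) = false := by rw [← h0]; exact hbF
        simp only [Nat.cast_zero, add_zero] at hbF0
        rw [hbF0] at hsi; exact Bool.false_ne_true hsi
      · exact h0
    have htb : k ≤ t + b := by
      by_contra hc
      push_neg at hc
      have := hrun (t + b) hc
      rw [Nat.cast_add, ← add_assoc, ← hij] at this
      rw [this] at hbF
      exact absurd hbF (by simp)
    have hLtb : L ≤ t + b := le_trans h htb
    refine ⟨b, hb1, hbL, hbF, ?_⟩
    intro m hm
    by_cases hcase : m + b < L
    · -- use the run, index j + (t + b + m - L)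
      have htm : L ≤ t + b + m := by omega
      have hd : t + b + m - L < k := by omega
      have hidx : i + (b : ZMod n') - (L : ZMod n') + (m : ZMod n')
          = j + ((t + b + m - L : ℕ) : ZMod n') := by
        have : ((t + b + m - L : ℕ) : ZMod n') = (t : ZMod n') + b - L + m := by
          have := Nat.cast_sub (R := ZMod n') htm
          rw [this]
          push_cast
          ring
        rw [this, hij]
        ring
      rw [hidx]
      exact hrun _ hd
    · -- use minimality of b, index i + (b + m - L)
      have hbm : L ≤ b + m := by omega
      have hlt : b + m - L < b := by omega
      have hidx : i + (b : ZMod n') - (L : ZMod n') + (m : ZMod n')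
          = i + ((b + m - L : ℕ) : ZMod n') := by
        have : ((b + m - L : ℕ) : ZMod n') = (b : ZMod n') + m - L := by
          have := Nat.cast_sub (R := ZMod n') hbm
          rw [this]
          push_cast
          ring
        rw [this]
        ring
      rw [hidx]
      exact hmin _ hlt

lemma window_prob {Ω : Type} [MeasurableSpace Ω] (μ : Measure Ω) [IsProbabilityMeasure μ]
    {n' : ℕ} [NeZero n'] (S : ZMod n' → Ω → Bool) (hS : ∀ i, Measurable (S i))
    (hind : iIndepFun S μ)
    (x : ZMod n') (k : ℕ) (hk : k ≤ n') (v : ℕ → Bool) (p : ℝ)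
    (hp : ∀ i, (μ {ω | S i ω = true}).toReal = p) :
    (μ (⋂ m ∈ Finset.range k, {ω | S (x + (m : ZMod n')) ω = v m})).toReal
      = ∏ m ∈ Finset.range k, (if v m then p else 1 - p) := by
  classical
  set e : ℕ → ZMod n' := fun m => x + (m : ZMod n') with he
  have hinj : ∀ a ∈ Finset.range k, ∀ b ∈ Finset.range k, e a = e b → a = b := by
    intro a ha b hb hab
    simp only [Finset.mem_range] at ha hb
    have : (a : ZMod n') = (b : ZMod n') := by
      have := add_left_cancel hab
      exact this
    have hval : (a : ZMod n').val = (b : ZMod n').val := by rw [this]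
    rwa [ZMod.val_natCast, ZMod.val_natCast, Nat.mod_eq_of_lt (lt_of_lt_of_le ha hk),
      Nat.mod_eq_of_lt (lt_of_lt_of_le hb hk)] at hval
  set sets : ZMod n' → Set Bool := fun j => {b : Bool | b = v ((j - x).val)} with hsets
  have hkey : ∀ m, m < k → S (e m) ⁻¹' sets (e m) = {ω | S (x + (m : ZMod n')) ω = v m} := by
    intro m hm
    have hval : ((e m) - x).val = m := by
      simp only [he]
      rw [add_sub_cancel_left, ZMod.val_natCast, Nat.mod_eq_of_lt (lt_of_lt_of_le hm hk)]
    ext ω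
    simp [hsets, hval]
    exact Iff.rfl
  have hEvent : (⋂ m ∈ Finset.range k, {ω | S (x + (m : ZMod n')) ω = v m})
      = ⋂ j ∈ Finset.image e (Finset.range k), S j ⁻¹' sets j := by
    ext ω
    simp only [Set.mem_iInter, Finset.mem_image, Finset.mem_range]
    constructor
    · rintro h j ⟨m, hm, rfl⟩
      rw [hkey m hm]
      exact h m hm
    · intro h m hm
      have := h (e m) ⟨m, hm, rfl⟩
      rwa [hkey m hm] at this
  rw [hEvent]
  rw [hind.measure_inter_preimage_eq_mul (Finset.image e (Finset.range k))
    (fun i _ => (Set.to_countable _).measurableSet)]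
  rw [Finset.prod_image hinj, ENNReal.toReal_prod]
  refine Finset.prod_congr rfl ?_
  intro m hm
  rw [Finset.mem_range] at hm
  rw [hkey m hm]
  rcases Bool.eq_false_or_eq_true (v m) with hv | hv
  · rw [hv]; simp only [if_pos rfl]; exact hp _
  · rw [hv]
    simp only [Bool.false_eq_true, if_false]
    have hset : {ω | S (x + (m : ZMod n')) ω = false} = {ω | S (x + (m : ZMod n')) ω = true}ᶜ := by
      ext ω; simp
    rw [hset, measure_compl (s := {ω | S (x + (m : ZMod n')) ω = true}) (by exact (hS _) (measurableSet_singleton true)) (measure_ne_top μ _)]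
    rw [measure_univ, ENNReal.toReal_sub_of_le prob_le_one ENNReal.one_ne_top,
      ENNReal.toReal_one, hp]

lemma measA {Ω : Type} [MeasurableSpace Ω] {n' : ℕ} [NeZero n']
    (w : ℝ) (S : ZMod n' → Ω → Bool) (hS : ∀ i, Measurable (S i)) (i : ZMod n') :
    MeasurableSet {ω | w < (runLen (fun j => S j ω) i : ℝ)} := by
  have hF : Measurable (fun ω => (fun j => S j ω)) := measurable_pi_lambda _ hS
  have : {ω | w < (runLen (fun j => S j ω) i : ℝ)}
      = (fun ω => (fun j => S j ω)) ⁻¹' {s : ZMod n' → Bool | w < (runLen s i : ℝ)} := rfl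
  rw [this]
  exact hF ((Set.to_countable _).measurableSet)

lemma exp_count {Ω : Type} [MeasurableSpace Ω] (μ : Measure Ω) [IsProbabilityMeasure μ]
    {n' : ℕ} [NeZero n'] (w : ℝ) (S : ZMod n' → Ω → Bool) (hS : ∀ i, Measurable (S i)) :
    ∫ ω, (runSumGT w (fun i => S i ω) : ℝ) ∂μ
      = ∑ i : ZMod n', (μ {ω | w < (runLen (fun j => S j ω) i : ℝ)}).toReal := by
  classical
  have hcount : ∀ s : ZMod n' → Bool, (runSumGT w s : ℝ)
      = ∑ i : ZMod n', Set.indicator {s' : ZMod n' → Bool | w < (runLen s' i : ℝ)}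
          (fun _ => (1:ℝ)) s := by
    intro s
    have h1 : {i : ZMod n' | w < (runLen s i : ℝ)}
        = ↑(Finset.univ.filter (fun i => w < (runLen s i : ℝ))) := by ext; simp
    rw [runSumGT, h1, Nat.card_coe_set_eq, Set.ncard_coe_finset, Finset.card_filter]
    push_cast
    refine Finset.sum_congr rfl ?_
    intro i _
    rw [Set.indicator_apply]
    by_cases h : w < (runLen s i : ℝ) <;> simp [h]
  have hrw : (fun ω => (runSumGT w (fun i => S i ω) : ℝ))
      = fun ω => ∑ i : ZMod n', Set.indicator {ω' | w < (runLen (fun j => S j ω') i : ℝ)}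
          (fun _ => (1:ℝ)) ω := by
    funext ω
    rw [hcount]
    refine Finset.sum_congr rfl fun i _ => ?_
    rw [Set.indicator_apply, Set.indicator_apply]
    rfl
  rw [hrw, integral_finset_sum]
  · refine Finset.sum_congr rfl fun i _ => ?_
    rw [integral_indicator_const (1:ℝ) (measA w S hS i), smul_eq_mul, mul_one]
    rfl
  · intro i _
    exact (integrable_const (1:ℝ)).indicator (measA w S hS i)

lemma per_i_bound {Ω : Type} [MeasurableSpace Ω] (μ : Measure Ω) [IsProbabilityMeasure μ]
    {n' : ℕ} [NeZero n'] (S : ZMod n' → Ω → Bool) (hS : ∀ i, Measurable (S i))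
    (hind : iIndepFun S μ) (p : ℝ)
    (hp : ∀ i, (μ {ω | S i ω = true}).toReal = p)
    (w : ℝ) (hw : 0 ≤ w) (L : ℕ) (hL : L = Nat.floor w + 1) (hLn : L + 1 ≤ n') (i : ZMod n') :
    (μ {ω | w < (runLen (fun j => S j ω) i : ℝ)}).toReal
      ≤ p ^ L + ((L : ℝ) - 1) * ((1 - p) * p ^ L) := by
  classical
  set FL : Set Ω := ⋂ m ∈ Finset.range L, {ω | S (i + (m : ZMod n')) ω = true} with hFL
  set Fb : ℕ → Set Ω := fun b => ⋂ m ∈ Finset.range (L + 1),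
      {ω | S (i + (b : ZMod n') - (L : ZMod n') + (m : ZMod n')) ω = decide (m < L)} with hFb
  have hL1 : 1 ≤ L := by omega
  have hsub : {ω | w < (runLen (fun j => S j ω) i : ℝ)}
      ⊆ FL ∪ ⋃ b ∈ Finset.Ico 1 L, Fb b := by
    intro ω hω
    have hωlt : w < (runLen (fun j => S j ω) i : ℝ) := hω
    have hLle : L ≤ runLen (fun j => S j ω) i := by
      have h1 : (Nat.floor w : ℝ) < (runLen (fun j => S j ω) i : ℝ) :=
        lt_of_le_of_lt (Nat.floor_le hw) hωlt
      have := Nat.cast_lt.mp h1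
      omega
    rcases run_decomp (fun j => S j ω) i L hL1 hLle with hcase | ⟨b, hb1, hbL, hFalse, hTrue⟩
    · left
      simp only [hFL, Set.mem_iInter]
      intro m hm
      exact hcase m (Finset.mem_range.mp hm)
    · right
      simp only [Set.mem_iUnion]
      refine ⟨b, Finset.mem_Ico.mpr ⟨hb1, hbL⟩, ?_⟩
      simp only [hFb, Set.mem_iInter]
      intro m hm
      rw [Finset.mem_range] at hm
      by_cases hmL : m < L
      · simp only [Set.mem_setOf_eq]
        rw [show decide (m < L) = true from by simp [hmL]]
        exact hTrue m hmL
      · have hmeq : m = L := by omega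
        simp only [Set.mem_setOf_eq, hmeq]
        rw [show decide (L < L) = false from by simp]
        have hidx : i + (b : ZMod n') - (L : ZMod n') + (L : ZMod n') = i + (b : ZMod n') := by
          ring
        rw [hidx]
        exact hFalse
  have hmeasle : μ {ω | w < (runLen (fun j => S j ω) i : ℝ)}
      ≤ μ FL + ∑ b ∈ Finset.Ico 1 L, μ (Fb b) := by
    calc μ {ω | w < (runLen (fun j => S j ω) i : ℝ)}
        ≤ μ (FL ∪ ⋃ b ∈ Finset.Ico 1 L, Fb b) := measure_mono hsub
      _ ≤ μ FL + μ (⋃ b ∈ Finset.Ico 1 L, Fb b) := measure_union_le _ _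
      _ ≤ μ FL + ∑ b ∈ Finset.Ico 1 L, μ (Fb b) := by
          gcongr
          exact measure_biUnion_finset_le _ _
  have hne : (μ FL + ∑ b ∈ Finset.Ico 1 L, μ (Fb b)) ≠ ⊤ := by
    refine ENNReal.add_ne_top.mpr ⟨measure_ne_top μ _, ?_⟩
    exact (ENNReal.sum_lt_top.mpr fun b _ => measure_lt_top μ _).ne
  have hreal : (μ {ω | w < (runLen (fun j => S j ω) i : ℝ)}).toReal
      ≤ (μ FL + ∑ b ∈ Finset.Ico 1 L, μ (Fb b)).toReal :=
    ENNReal.toReal_mono hne hmeasle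
  rw [ENNReal.toReal_add (measure_ne_top μ _)
    ((ENNReal.sum_lt_top.mpr fun b _ => measure_lt_top μ _).ne), ENNReal.toReal_sum
    (fun b _ => measure_ne_top μ _)] at hreal
  have hFLval : (μ FL).toReal = p ^ L := by
    rw [hFL]
    rw [show (⋂ m ∈ Finset.range L, {ω | S (i + (m : ZMod n')) ω = true})
      = ⋂ m ∈ Finset.range L, {ω | S (i + (m : ZMod n')) ω = (fun _ : ℕ => true) m} from rfl]
    rw [window_prob μ S hS hind i L (by omega) (fun _ => true) p hp]
    simp [Finset.prod_const]
  have hFbval : ∀ b ∈ Finset.Ico 1 L, (μ (Fb b)).toReal = (1 - p) * p ^ L := by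
    intro b _
    rw [hFb]
    rw [window_prob μ S hS hind (i + (b : ZMod n') - (L : ZMod n')) (L + 1) hLn
      (fun m => decide (m < L)) p hp]
    rw [Finset.prod_range_succ]
    have h1 : ∀ m ∈ Finset.range L, (if decide (m < L) then p else 1 - p) = p := by
      intro m hm
      rw [Finset.mem_range] at hm
      simp [hm]
    rw [Finset.prod_congr rfl h1, Finset.prod_const, Finset.card_range]
    simp [mul_comm]
  rw [hFLval, Finset.sum_congr rfl hFbval, Finset.sum_const, Nat.card_Ico] at hreal
  have : ((L - 1 : ℕ) : ℝ) = (L : ℝ) - 1 := by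
    rw [Nat.cast_sub hL1]; norm_num
  rw [nsmul_eq_mul, this] at hreal
  exact hreal

lemma ev_y (τ : ℝ) (hτ : 0 < τ) : ∀ᶠ y : ℝ in atTop,
    1 ≤ Real.log y ∧
    Real.exp 1 ≤ τ * y / (2 * (Real.log y) ^ 2) ∧
    Real.log (τ * y) ≤ y ∧
    (τ + 2) * y ^ 4 ≤ 16 * τ ^ ((3:ℝ)/4) * Real.exp (Real.exp y) := by
  have hτ34 : 0 < 16 * τ ^ ((3:ℝ)/4) := by positivity
  have h1 : ∀ᶠ y : ℝ in atTop, 1 ≤ Real.log y :=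
    Real.tendsto_log_atTop.eventually_ge_atTop 1
  have h0 : ∀ᶠ y : ℝ in atTop, 0 < y := eventually_gt_atTop 0
  have h2 : ∀ᶠ y : ℝ in atTop, Real.exp 1 ≤ τ * y / (2 * (Real.log y) ^ 2) := by
    have hu2 : ∀ᶠ u : ℝ in atTop, 2 * Real.exp 1 / τ ≤ Real.exp u / u ^ 2 :=
      (Real.tendsto_exp_div_pow_atTop 2).eventually_ge_atTop _
    filter_upwards [Real.tendsto_log_atTop.eventually hu2, h0, h1] with y hu hy0 hly
    rw [Real.exp_log hy0] at hu
    have hsq : 0 < (Real.log y) ^ 2 := by nlinarith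
    rw [div_le_div_iff₀ hτ hsq] at hu
    rw [le_div_iff₀ (by nlinarith)]
    nlinarith [Real.exp_pos 1]
  have h3 : ∀ᶠ y : ℝ in atTop, Real.log (τ * y) ≤ y := by
    have hu3 : ∀ᶠ u : ℝ in atTop, 2 ≤ Real.exp u / u ^ 1 :=
      (Real.tendsto_exp_div_pow_atTop 1).eventually_ge_atTop 2
    filter_upwards [Real.tendsto_log_atTop.eventually hu3, h0, h1,
      Real.tendsto_log_atTop.eventually_ge_atTop (Real.log τ)] with y hu hy0 hly hlτ
    rw [Real.exp_log hy0, pow_one] at hu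
    have hlypos : 0 < Real.log y := by linarith
    rw [Real.log_mul hτ.ne' hy0.ne']
    have : 2 * Real.log y ≤ y := by
      rw [le_div_iff₀ hlypos] at hu
      linarith
    linarith
  have h4 : ∀ᶠ y : ℝ in atTop,
      (τ + 2) * y ^ 4 ≤ 16 * τ ^ ((3:ℝ)/4) * Real.exp (Real.exp y) := by
    have hu4 : ∀ᶠ y : ℝ in atTop,
        (τ + 2) / (16 * τ ^ ((3:ℝ)/4)) ≤ Real.exp y / y ^ 4 :=
      (Real.tendsto_exp_div_pow_atTop 4).eventually_ge_atTop _
    filter_upwards [hu4, h0] with y hu hy0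
    have hy4 : 0 < y ^ 4 := by positivity
    rw [div_le_div_iff₀ hτ34 hy4] at hu
    have hexp : Real.exp y ≤ Real.exp (Real.exp y) :=
      Real.exp_le_exp.mpr (by linarith [Real.add_one_le_exp y])
    calc (τ + 2) * y ^ 4 ≤ 16 * τ ^ ((3:ℝ)/4) * Real.exp y := by linarith
      _ ≤ 16 * τ ^ ((3:ℝ)/4) * Real.exp (Real.exp y) := by nlinarith
  filter_upwards [h1, h2, h3, h4] with y a b c d
  exact ⟨a, b, c, d⟩

set_option maxHeartbeats 2000000 in
/-- **Expected number of widening sectors.**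
There is a constant `K > 0` such that for all sufficiently large `n`, for every circular
sequence of `n' ≤ 4n/γ(n,τ)` i.i.d. indicator random variables whose success
probability `p` satisfies `p ≤ exp(−e^{−γ})` and `1 − p ≤ e^{−γ/4}`, the expected sum
`E[W]` of the lengths of all success runs of length greater than
`w = e^{γ}·log^{(3)}(n)` satisfies
`E[W] ≤ K·τ^{3/4}·n/(γ·(log^{(2)} n)^{1/4}·(log^{(3)} n)^{1/2})`. -/
theorem expected_widening_sectors (τ : ℝ) (hτ : 0 < τ) :
    ∃ K : ℝ, 0 < K ∧ ∀ᶠ n : ℕ in atTop,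
      ∀ (n' : ℕ), 0 < n' → (n' : ℝ) ≤ 4 * n / gam n τ →
      ∀ (Ω : Type) (_ : MeasurableSpace Ω) (μ : Measure Ω),
        IsProbabilityMeasure μ →
      ∀ (S : ZMod n' → Ω → Bool), (∀ i, Measurable (S i)) →
        iIndepFun S μ →
      ∀ p : ℝ, (∀ i, (μ {ω | S i ω = true}).toReal = p) →
        p ≤ Real.exp (-Real.exp (-gam n τ)) →
        1 - p ≤ Real.exp (-gam n τ / 4) →
      ∫ ω, (runSumGT (wThr n τ) (fun i => S i ω) : ℝ) ∂μ ≤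
        K * τ ^ ((3 : ℝ) / 4) * n /
          (gam n τ * (loglog n) ^ ((1 : ℝ) / 4) * (logloglog n) ^ ((1 : ℝ) / 2)) := by
  refine ⟨16, by norm_num, ?_⟩
  have htendlog : Tendsto (fun n : ℕ => loglog n) atTop atTop :=
    (Real.tendsto_log_atTop.comp Real.tendsto_log_atTop).comp tendsto_natCast_atTop_atTop
  filter_upwards [eventually_ge_atTop 3, htendlog.eventually (ev_y τ hτ)] with n hn3 hyP
  intro n' hn'pos hn'le Ω mΩ μ hμ S hS hind p hp hple hpge
  haveI : NeZero n' := ⟨hn'pos.ne'⟩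
  have hzdef : Real.log (loglog n) = logloglog n := rfl
  rw [hzdef] at hyP
  obtain ⟨hz1, hee, hlogτy, hbig⟩ := hyP
  set y := loglog n with hydef
  set z := logloglog n with hzd
  set γ := gam n τ with hγd
  -- basic positivity facts
  have hn3R : (3:ℝ) ≤ (n:ℝ) := by exact_mod_cast hn3
  have hnpos : (0:ℝ) < (n:ℝ) := by linarith
  have hlogn : 1 < Real.log n := by
    rw [Real.lt_log_iff_exp_lt hnpos]
    calc Real.exp 1 < 2.7182818286 := Real.exp_one_lt_d9
      _ ≤ (n:ℝ) := by linarith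
  have hy_pos : 0 < y := Real.log_pos hlogn
  have hzpos : (0:ℝ) < z := lt_of_lt_of_le one_pos hz1
  have hy1 : (1:ℝ) ≤ y := by
    have h1 : Real.exp 1 ≤ y := by
      rw [← Real.exp_log hy_pos]
      exact Real.exp_le_exp.mpr hz1
    linarith [Real.add_one_le_exp (1:ℝ)]
  have hargpos : 0 < τ * y / (2 * z ^ 2) := by
    apply div_pos (mul_pos hτ hy_pos)
    nlinarith
  have hexpγ : Real.exp γ = τ * y / (2 * z ^ 2) := Real.exp_log hargpos
  have hγ1 : (1:ℝ) ≤ γ := by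
    have := Real.exp_le_exp.mp (show Real.exp 1 ≤ Real.exp γ by rw [hexpγ]; exact hee)
    exact this
  have hγpos : (0:ℝ) < γ := lt_of_lt_of_le one_pos hγ1
  have hwdef : wThr n τ = Real.exp γ * z := rfl
  have hwpos : 0 < wThr n τ := by rw [hwdef]; positivity
  set L : ℕ := Nat.floor (wThr n τ) + 1 with hLdef
  have hwL : wThr n τ < (L : ℝ) := by
    rw [hLdef]; push_cast; exact Nat.lt_floor_add_one _
  have hLw : (L : ℝ) ≤ wThr n τ + 1 := by
    rw [hLdef]; push_cast; linarith [Nat.floor_le hwpos.le]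
  -- positivity of rpow quantities
  have hy14 : (0:ℝ) < y ^ ((1:ℝ)/4) := Real.rpow_pos_of_pos hy_pos _
  have hz12 : (0:ℝ) < z ^ ((1:ℝ)/2) := Real.rpow_pos_of_pos hzpos _
  have hden : (0:ℝ) < γ * y ^ ((1:ℝ)/4) * z ^ ((1:ℝ)/2) := by positivity
  have hτ34 : (0:ℝ) < τ ^ ((3:ℝ)/4) := Real.rpow_pos_of_pos hτ _
  -- exp(exp y) = n
  have hnexp : Real.exp (Real.exp y) = (n:ℝ) := by
    rw [hydef]
    rw [show loglog n = Real.log (Real.log n) from rfl]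
    rw [Real.exp_log (by linarith : (0:ℝ) < Real.log n), Real.exp_log hnpos]
  rw [exp_count μ (wThr n τ) S hS]
  have hp0 : 0 ≤ p := by rw [← hp 0]; exact ENNReal.toReal_nonneg
  have hp1 : p ≤ 1 := by
    rw [← hp 0]
    calc (μ {ω | S 0 ω = true}).toReal ≤ (1 : ENNReal).toReal :=
          ENNReal.toReal_mono ENNReal.one_ne_top prob_le_one
      _ = 1 := ENNReal.toReal_one
  by_cases hcase : L + 1 ≤ n'
  · -- main case
    have hqbound : ∀ i : ZMod n',
        (μ {ω | wThr n τ < (runLen (fun j => S j ω) i : ℝ)}).toReal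
          ≤ p ^ L + ((L : ℝ) - 1) * ((1 - p) * p ^ L) :=
      per_i_bound μ S hS hind p hp (wThr n τ) hwpos.le L hLdef hcase
    have hsum : ∑ i : ZMod n', (μ {ω | wThr n τ < (runLen (fun j => S j ω) i : ℝ)}).toReal
        ≤ (n' : ℝ) * (p ^ L + ((L : ℝ) - 1) * ((1 - p) * p ^ L)) := by
      calc ∑ i : ZMod n', (μ {ω | wThr n τ < (runLen (fun j => S j ω) i : ℝ)}).toReal
          ≤ ∑ _i : ZMod n', (p ^ L + ((L : ℝ) - 1) * ((1 - p) * p ^ L)) :=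
            Finset.sum_le_sum fun i _ => hqbound i
        _ = (n' : ℝ) * (p ^ L + ((L : ℝ) - 1) * ((1 - p) * p ^ L)) := by
            rw [Finset.sum_const, Finset.card_univ, ZMod.card, nsmul_eq_mul]
    -- bound p^L
    have hpL : p ^ L ≤ 1 / y := by
      calc p ^ L ≤ (Real.exp (-Real.exp (-γ))) ^ L := pow_le_pow_left₀ hp0 hple L
        _ = Real.exp ((L : ℝ) * (-Real.exp (-γ))) := by
            rw [← Real.exp_nat_mul]
        _ ≤ Real.exp (wThr n τ * (-Real.exp (-γ))) := by
            apply Real.exp_le_exp.mpr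
            have := Real.exp_pos (-γ)
            nlinarith
        _ = Real.exp (-z) := by
            congr 1
            have hinv : Real.exp (-γ) * Real.exp γ = 1 := by
              rw [← Real.exp_add]; simp
            rw [hwdef]
            linear_combination (-z) * hinv
        _ = 1 / y := by
            rw [Real.exp_neg, ← hzdef, Real.exp_log hy_pos, one_div]
    have h1p : 0 ≤ 1 - p := by linarith
    have hterm : ((L : ℝ) - 1) * ((1 - p) * p ^ L)
        ≤ wThr n τ * Real.exp (-γ/4) * (1 / y) := by
      have h1 : ((L:ℝ) - 1) ≤ wThr n τ := by linarith
      have h2 : (1 - p) * p ^ L ≤ Real.exp (-γ/4) * (1 / y) := by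
        apply mul_le_mul hpge hpL (by positivity) (Real.exp_pos _).le
      have h3 := mul_le_mul h1 h2 (mul_nonneg h1p (by positivity)) hwpos.le
      exact h3.trans_eq (by ring)
    -- now the key numeric bound
    have hwex : wThr n τ * Real.exp (-γ/4) = Real.exp ((3/4) * γ) * z := by
      rw [hwdef]
      have h34 : Real.exp γ * Real.exp (-γ/4) = Real.exp ((3/4) * γ) := by
        rw [← Real.exp_add]; ring_nf
      calc Real.exp γ * z * Real.exp (-γ/4) = Real.exp γ * Real.exp (-γ/4) * z := by ring
        _ = Real.exp ((3/4) * γ) * z := by rw [h34]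
    have hone_le : 1 ≤ wThr n τ * Real.exp (-γ/4) := by
      rw [hwex]
      have h1 : (1:ℝ) ≤ Real.exp ((3/4) * γ) := Real.one_le_exp (by linarith)
      calc (1:ℝ) = 1 * 1 := by ring
        _ ≤ Real.exp ((3/4) * γ) * z := mul_le_mul h1 hz1 one_pos.le (by linarith)
    have hq2 : p ^ L + ((L : ℝ) - 1) * ((1 - p) * p ^ L)
        ≤ 2 * (Real.exp ((3/4) * γ) * z) / y := by
      have e1 : p ^ L + ((L : ℝ) - 1) * ((1 - p) * p ^ L)
          ≤ 1/y + wThr n τ * Real.exp (-γ/4) * (1/y) := by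
        linarith [hterm, hpL]
      have e2 : (1:ℝ)/y ≤ wThr n τ * Real.exp (-γ/4) * (1/y) := by
        have h4 := mul_le_mul_of_nonneg_right hone_le (le_of_lt (one_div_pos.mpr hy_pos))
        calc (1:ℝ)/y = 1 * (1/y) := by ring
          _ ≤ wThr n τ * Real.exp (-γ/4) * (1/y) := h4
      calc p ^ L + ((L : ℝ) - 1) * ((1 - p) * p ^ L)
          ≤ 2 * (wThr n τ * Real.exp (-γ/4)) * (1/y) := by linarith
        _ = 2 * (Real.exp ((3/4) * γ) * z) / y := by rw [hwex]; ring
    -- bound exp((3/4)γ)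
    have hE34 : Real.exp ((3/4) * γ) ≤ τ ^ ((3:ℝ)/4) * y ^ ((3:ℝ)/4) / z ^ ((3:ℝ)/2) := by
      have h1 : Real.exp ((3/4) * γ) = (τ * y / (2 * z ^ 2)) ^ ((3:ℝ)/4) := by
        rw [show (3/4:ℝ)*γ = γ*(3/4) by ring, Real.exp_mul, hexpγ]
      rw [h1]
      have h2 : τ * y / (2 * z ^ 2) ≤ τ * y / z ^ 2 := by
        gcongr <;> nlinarith
      calc (τ * y / (2 * z ^ 2)) ^ ((3:ℝ)/4) ≤ (τ * y / z ^ 2) ^ ((3:ℝ)/4) :=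
            Real.rpow_le_rpow (by positivity) h2 (by norm_num)
        _ = τ ^ ((3:ℝ)/4) * y ^ ((3:ℝ)/4) / z ^ ((3:ℝ)/2) := by
            rw [Real.div_rpow (by positivity) (by positivity),
              Real.mul_rpow hτ.le hy_pos.le]
            congr 1
            rw [← Real.rpow_natCast z 2, ← Real.rpow_mul hzpos.le]
            norm_num
    -- rpow identities
    have hyy : y ^ ((3:ℝ)/4) * y ^ ((1:ℝ)/4) = y := by
      rw [← Real.rpow_add hy_pos]
      norm_num
    have hzz : z ^ ((3:ℝ)/2) = z * z ^ ((1:ℝ)/2) := by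
      rw [show (3:ℝ)/2 = 1 + 1/2 by norm_num, Real.rpow_add hzpos, Real.rpow_one]
    have hy34pos : (0:ℝ) < y ^ ((3:ℝ)/4) := Real.rpow_pos_of_pos hy_pos _
    have hz32pos : (0:ℝ) < z ^ ((3:ℝ)/2) := Real.rpow_pos_of_pos hzpos _
    -- key bound on q * (y^{1/4} z^{1/2})
    have hq3 : p ^ L + ((L : ℝ) - 1) * ((1 - p) * p ^ L)
        ≤ 2 * (τ ^ ((3:ℝ)/4) * y ^ ((3:ℝ)/4) / z ^ ((3:ℝ)/2) * z) / y := by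
      refine hq2.trans ?_
      have h1 : Real.exp ((3/4) * γ) * z ≤ τ ^ ((3:ℝ)/4) * y ^ ((3:ℝ)/4) / z ^ ((3:ℝ)/2) * z :=
        mul_le_mul_of_nonneg_right hE34 hzpos.le
      have h2 : 2 * (Real.exp ((3/4) * γ) * z)
          ≤ 2 * (τ ^ ((3:ℝ)/4) * y ^ ((3:ℝ)/4) / z ^ ((3:ℝ)/2) * z) := by linarith
      exact div_le_div_of_nonneg_right h2 hy_pos.le
    have hkey : (p ^ L + ((L : ℝ) - 1) * ((1 - p) * p ^ L)) * (y ^ ((1:ℝ)/4) * z ^ ((1:ℝ)/2))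
        ≤ 4 * τ ^ ((3:ℝ)/4) := by
      have hmul : (2 * (τ ^ ((3:ℝ)/4) * y ^ ((3:ℝ)/4) / z ^ ((3:ℝ)/2) * z) / y)
          * (y ^ ((1:ℝ)/4) * z ^ ((1:ℝ)/2)) = 2 * τ ^ ((3:ℝ)/4) := by
        rw [hzz]
        field_simp
        linear_combination hyy
      calc (p ^ L + ((L : ℝ) - 1) * ((1 - p) * p ^ L)) * (y ^ ((1:ℝ)/4) * z ^ ((1:ℝ)/2))
          ≤ (2 * (τ ^ ((3:ℝ)/4) * y ^ ((3:ℝ)/4) / z ^ ((3:ℝ)/2) * z) / y)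
              * (y ^ ((1:ℝ)/4) * z ^ ((1:ℝ)/2)) :=
            mul_le_mul_of_nonneg_right hq3 (by positivity)
        _ = 2 * τ ^ ((3:ℝ)/4) := hmul
        _ ≤ 4 * τ ^ ((3:ℝ)/4) := by linarith
    have hL1R : (1:ℝ) ≤ (L : ℝ) := by
      have : 1 ≤ L := by omega
      exact_mod_cast this
    have hq0 : 0 ≤ p ^ L + ((L : ℝ) - 1) * ((1 - p) * p ^ L) := by
      have h1 : (0:ℝ) ≤ p ^ L := by positivity
      have h2 : (0:ℝ) ≤ ((L : ℝ) - 1) * ((1 - p) * p ^ L) :=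
        mul_nonneg (by linarith) (mul_nonneg h1p h1)
      linarith
    rw [le_div_iff₀ hden]
    calc (∑ i : ZMod n', (μ {ω | wThr n τ < (runLen (fun j => S j ω) i : ℝ)}).toReal)
          * (γ * y ^ ((1:ℝ)/4) * z ^ ((1:ℝ)/2))
        ≤ ((n' : ℝ) * (p ^ L + ((L : ℝ) - 1) * ((1 - p) * p ^ L)))
            * (γ * y ^ ((1:ℝ)/4) * z ^ ((1:ℝ)/2)) :=
          mul_le_mul_of_nonneg_right hsum hden.le
      _ ≤ ((4 * n / γ) * (p ^ L + ((L : ℝ) - 1) * ((1 - p) * p ^ L)))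
            * (γ * y ^ ((1:ℝ)/4) * z ^ ((1:ℝ)/2)) :=
          mul_le_mul_of_nonneg_right (mul_le_mul_of_nonneg_right hn'le hq0) hden.le
      _ = 4 * (n : ℝ) * ((p ^ L + ((L : ℝ) - 1) * ((1 - p) * p ^ L))
            * (y ^ ((1:ℝ)/4) * z ^ ((1:ℝ)/2))) := by
          field_simp
      _ ≤ 4 * (n : ℝ) * (4 * τ ^ ((3:ℝ)/4)) :=
          mul_le_mul_of_nonneg_left hkey (by positivity)
      _ = 16 * τ ^ ((3:ℝ)/4) * (n : ℝ) := by ring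
  · -- degenerate case: n' ≤ L
    have hn'L : (n' : ℝ) ≤ (L : ℝ) := by
      have : n' ≤ L := by omega
      exact_mod_cast this
    have hSig : ∑ i : ZMod n', (μ {ω | wThr n τ < (runLen (fun j => S j ω) i : ℝ)}).toReal
        ≤ (n' : ℝ) := by
      calc ∑ i : ZMod n', (μ {ω | wThr n τ < (runLen (fun j => S j ω) i : ℝ)}).toReal
          ≤ ∑ _i : ZMod n', (1:ℝ) := by
            refine Finset.sum_le_sum fun i _ => ?_
            calc (μ _).toReal ≤ (1 : ENNReal).toReal :=
                  ENNReal.toReal_mono ENNReal.one_ne_top prob_le_one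
              _ = 1 := ENNReal.toReal_one
        _ = (n' : ℝ) := by
            rw [Finset.sum_const, Finset.card_univ, ZMod.card, nsmul_eq_mul, mul_one]
    refine hSig.trans ?_
    rw [le_div_iff₀ hden]
    have hγy : γ ≤ y := by
      refine le_trans ?_ hlogτy
      refine Real.log_le_log hargpos ?_
      apply div_le_self (by positivity)
      nlinarith
    have hy14y : y ^ ((1:ℝ)/4) ≤ y := by
      calc y ^ ((1:ℝ)/4) ≤ y ^ (1:ℝ) := Real.rpow_le_rpow_of_exponent_le hy1 (by norm_num)
        _ = y := Real.rpow_one y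
    have hzy : z ≤ y := by
      have h1 : Real.log y ≤ y - 1 := Real.log_le_sub_one_of_pos hy_pos
      rw [hzdef] at h1
      linarith
    have hz12y : z ^ ((1:ℝ)/2) ≤ y := by
      calc z ^ ((1:ℝ)/2) ≤ z ^ (1:ℝ) := Real.rpow_le_rpow_of_exponent_le hz1 (by norm_num)
        _ = z := Real.rpow_one z
        _ ≤ y := hzy
    have hweq : wThr n τ = τ * y / (2 * z) := by
      rw [hwdef, hexpγ]
      field_simp
    have hw1 : wThr n τ + 1 ≤ (τ + 2) * y := by
      rw [hweq]
      have h1 : τ * y / (2 * z) ≤ τ * y / 2 := by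
        gcongr <;> nlinarith
      nlinarith
    calc (n' : ℝ) * (γ * y ^ ((1:ℝ)/4) * z ^ ((1:ℝ)/2))
        ≤ (wThr n τ + 1) * (y * y * y) := by
          have hn'w : (n' : ℝ) ≤ wThr n τ + 1 := hn'L.trans hLw
          have e1 : (n' : ℝ) * (γ * y ^ ((1:ℝ)/4) * z ^ ((1:ℝ)/2))
              = (n' : ℝ) * γ * y ^ ((1:ℝ)/4) * z ^ ((1:ℝ)/2) := by ring
          have e2 : (wThr n τ + 1) * (y * y * y) = (wThr n τ + 1) * y * y * y := by ring
          rw [e1, e2]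
          gcongr <;> positivity
      _ ≤ (τ + 2) * y ^ 4 := by
          nlinarith [mul_le_mul_of_nonneg_right hw1 (show (0:ℝ) ≤ y*y*y by positivity)]
      _ ≤ 16 * τ ^ ((3:ℝ)/4) * Real.exp (Real.exp y) := hbig
      _ = 16 * τ ^ ((3:ℝ)/4) * (n : ℝ) := by rw [hnexp]
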